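/- Static regret for Optimistic Normalized Exponentiated Subgradient (ONES with θ_t ≡ 1): Let n ∈ ℕ, Δ^n = {w ∈ ℝ^{n+1} : w ≥ 0, Σ_i w_i = 1}, and a ∈ Δ^n with all coordinates strictly positive. Let T ≥ 1, η_1 ≥ η_2 ≥ … ≥ η_{T+1} > 0, and ℓ_t, ℓ̂_t ∈ ℝ^{n+1} for t = 1,…,T. Define, with N(v) = v/(Σ_i v_i) and ∘ the coordinatewise product: w̃_t = N(a ∘ exp(−η_t Σ_{i=1}^{t−1} ℓ_i)) and w_t = N(w̃_t ∘ exp(−η_t ℓ̂_t)) (exponential taken coordinatewise). Then for every u ∈ Δ^n: Σ_{t=1}^T ⟨ℓ_t, w_t − u⟩ ≤ (1/η_{T+1}) Σ_i u_i ln(u_i/a_i) + Σ_{t=1}^T (1/η_t) Q_2*(η_t ‖ℓ_t − ℓ̂_t‖_∞) − Σ_{t=1}^T (1/η_t) Σ_i w_{t,i} ln(w_{t,i}/w̃_{t,i}), where Q_2*(κ) = κ²/2 − (|κ| − 2)₊²/2 and the convention 0 ln(0/c) = 0 is used. -/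

import Mathlib

open Finset

/-- The probability simplex `Δⁿ ⊆ ℝ^{n+1}`. -/
def simplex (n : ℕ) : Set (Fin (n + 1) → ℝ) :=
  {w | (∀ i, 0 ≤ w i) ∧ ∑ i, w i = 1}

/-- The normalization operator `N(v) = v / ∑ᵢ vᵢ`. -/
noncomputable def nrm {n : ℕ} (v : Fin (n + 1) → ℝ) : Fin (n + 1) → ℝ :=
  fun i => v i / ∑ j, v j

/-- The `ℓ∞` (max) norm on `ℝ^{n+1}`. -/
noncomputable def linf {n : ℕ} (v : Fin (n + 1) → ℝ) : ℝ :=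
  Finset.univ.sup' Finset.univ_nonempty fun i => |v i|

/-- `Q_2*(κ) = κ²/2 − (|κ| − 2)₊²/2`, the conjugate of the truncated quadratic `Q_2`. -/
noncomputable def Q2star (κ : ℝ) : ℝ :=
  κ ^ 2 / 2 - (max (|κ| - 2) 0) ^ 2 / 2

/-! ### Auxiliary material -/

/-- auxiliary function h -/
private noncomputable def auxh (y : ℝ) : ℝ := (y + 1) * Real.log y - 2 * (y - 1)

private lemma auxh_hasDeriv {y : ℝ} (hy : 0 < y) :
    HasDerivAt auxh (Real.log y + (y + 1) * y⁻¹ - 2) y := by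
  have h1 : HasDerivAt (fun y : ℝ => y + 1) 1 y := (hasDerivAt_id y).add_const 1
  have h2 : HasDerivAt Real.log y⁻¹ y := Real.hasDerivAt_log hy.ne'
  have h3 := h1.mul h2
  have h4 : HasDerivAt (fun y : ℝ => 2 * (y - 1)) 2 y := by
    simpa using ((hasDerivAt_id y).sub_const 1).const_mul 2
  have := h3.sub h4
  exact this.congr_deriv (by ring)

private lemma auxh_mono : MonotoneOn auxh (Set.Ioi (0:ℝ)) := by
  have hderiv : ∀ y ∈ interior (Set.Ioi (0:ℝ)), 0 ≤ deriv auxh y := by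
    intro y hy
    rw [interior_Ioi] at hy
    have hy' : (0:ℝ) < y := hy
    rw [(auxh_hasDeriv hy').deriv]
    have := Real.one_sub_inv_le_log_of_pos hy'
    have h2 : (y + 1) * y⁻¹ = 1 + y⁻¹ := by field_simp
    rw [h2]; linarith
  have hdiff : DifferentiableOn ℝ auxh (interior (Set.Ioi (0:ℝ))) := by
    intro y hy
    rw [interior_Ioi] at hy
    exact (auxh_hasDeriv hy).differentiableAt.differentiableWithinAt
  exact monotoneOn_of_deriv_nonneg (convex_Ioi 0)
    (by rw [← interior_Ioi]; exact hdiff.continuousOn.mono (by rw [interior_Ioi])) hdiff hderiv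

private lemma auxh_one : auxh 1 = 0 := by simp [auxh]

private lemma auxh_nonneg {y : ℝ} (hy : 1 ≤ y) : 0 ≤ auxh y := by
  rw [← auxh_one]
  exact auxh_mono (by norm_num) (by simp; linarith) hy

private lemma auxh_nonpos {y : ℝ} (hy0 : 0 < y) (hy : y ≤ 1) : auxh y ≤ 0 := by
  rw [← auxh_one]
  exact auxh_mono (by simpa using hy0) (by norm_num) hy

/-- auxiliary function F for pointwise Pinsker -/
private noncomputable def auxF (x : ℝ) : ℝ :=
  2 * (x + 2) * (x * Real.log x - x + 1) - 3 * (x - 1) ^ 2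

private lemma auxF_cont : Continuous auxF := by
  have := Real.continuous_mul_log
  unfold auxF
  fun_prop

private lemma auxF_hasDeriv {y : ℝ} (hy : 0 < y) :
    HasDerivAt auxF (4 * auxh y) y := by
  have h1 : HasDerivAt (fun x : ℝ => x * Real.log x) (Real.log y + 1) y :=
    Real.hasDerivAt_mul_log hy.ne'
  have h2 : HasDerivAt (fun x : ℝ => x * Real.log x - x + 1) (Real.log y + 1 - 1) y := by
    simpa using (h1.sub (hasDerivAt_id y)).add_const 1
  have h3 : HasDerivAt (fun x : ℝ => 2 * (x + 2)) 2 y := by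
    simpa using ((hasDerivAt_id y).add_const 2).const_mul 2
  have h4 := h3.mul h2
  have h5 : HasDerivAt (fun x : ℝ => 3 * (x - 1) ^ 2) (3 * (2 * (y - 1))) y := by
    simpa using (((hasDerivAt_id y).sub_const 1).pow 2).const_mul 3
  have h6 := h4.sub h5
  exact h6.congr_deriv (by unfold auxh; ring)

private lemma auxF_one : auxF 1 = 0 := by simp [auxF]

private lemma auxF_nonneg {x : ℝ} (hx : 0 ≤ x) : 0 ≤ auxF x := by
  rcases le_or_gt 1 x with hx1 | hx1
  · have hmono : MonotoneOn auxF (Set.Ici (1:ℝ)) := by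
      apply monotoneOn_of_deriv_nonneg (convex_Ici 1) auxF_cont.continuousOn
      · intro y hy
        rw [interior_Ici] at hy
        exact (auxF_hasDeriv (lt_trans zero_lt_one hy)).differentiableAt.differentiableWithinAt
      · intro y hy
        rw [interior_Ici] at hy
        rw [(auxF_hasDeriv (lt_trans zero_lt_one hy)).deriv]
        have := auxh_nonneg hy.le
        linarith
    rw [← auxF_one]
    exact hmono (by norm_num) (by simpa using hx1) hx1
  · have hanti : AntitoneOn auxF (Set.Icc (0:ℝ) 1) := by
      apply antitoneOn_of_deriv_nonpos (convex_Icc 0 1) auxF_cont.continuousOn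
      · intro y hy
        rw [interior_Icc] at hy
        exact (auxF_hasDeriv hy.1).differentiableAt.differentiableWithinAt
      · intro y hy
        rw [interior_Icc] at hy
        rw [(auxF_hasDeriv hy.1).deriv]
        have := auxh_nonpos hy.1 hy.2.le
        linarith
    rw [← auxF_one]
    exact hanti (Set.mem_Icc.mpr ⟨hx, hx1.le⟩) (by norm_num) hx1.le

/-- Pointwise Pinsker refinement. -/
private lemma pw {x : ℝ} (hx : 0 ≤ x) :
    3 * (x - 1) ^ 2 ≤ 2 * (x + 2) * (x * Real.log x - x + 1) := by
  have := auxF_nonneg hx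
  unfold auxF at this
  linarith

/-- Kullback–Leibler divergence on `ℝ^{n+1}`. -/
noncomputable def KL {n : ℕ} (p q : Fin (n + 1) → ℝ) : ℝ :=
  ∑ i, p i * Real.log (p i / q i)

section klbasic
variable {n : ℕ}

lemma sum_pos_of_pos {v : Fin (n + 1) → ℝ} (hv : ∀ i, 0 < v i) : 0 < ∑ j, v j :=
  Finset.sum_pos (fun i _ => hv i) univ_nonempty

lemma nrm_pos {v : Fin (n + 1) → ℝ} (hv : ∀ i, 0 < v i) (i : Fin (n + 1)) : 0 < nrm v i :=
  div_pos (hv i) (sum_pos_of_pos hv)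

lemma nrm_sum {v : Fin (n + 1) → ℝ} (hv : ∀ i, 0 < v i) : ∑ i, nrm v i = 1 := by
  simp only [nrm]
  rw [← Finset.sum_div]
  exact div_self (sum_pos_of_pos hv).ne'

/-- Scale invariance of normalization. -/
lemma nrm_comp {c e : Fin (n + 1) → ℝ} (hc : ∀ i, 0 < c i) :
    nrm (fun i => nrm c i * e i) = nrm (fun i => c i * e i) := by
  have hS : (0:ℝ) < ∑ j, c j := sum_pos_of_pos hc
  funext i
  simp only [nrm]
  simp_rw [div_mul_eq_mul_div, ← Finset.sum_div]
  rcases eq_or_ne (∑ x, c x * e x) 0 with hB | hB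
  · simp [hB]
  · field_simp

/-- KL difference identity: the key "mirror descent" computation. -/
lemma kl_sub {u c g : Fin (n + 1) → ℝ} (hu0 : ∀ i, 0 ≤ u i) (hu1 : ∑ i, u i = 1)
    (hc : ∀ i, 0 < c i) :
    KL u c - KL u (nrm fun i => c i * Real.exp (-g i))
      = -(∑ i, u i * g i) - Real.log (∑ i, c i * Real.exp (-g i)) := by
  set Z := ∑ i, c i * Real.exp (-g i) with hZdef
  have hZ : 0 < Z := Finset.sum_pos (fun i _ => mul_pos (hc i) (Real.exp_pos _)) univ_nonempty
  have key : ∀ i, u i * Real.log (u i / c i)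
      - u i * Real.log (u i / nrm (fun i => c i * Real.exp (-g i)) i)
      = -(u i * g i) - u i * Real.log Z := by
    intro i
    rcases (hu0 i).eq_or_lt with h0 | h0
    · simp [← h0]
    · have hx : nrm (fun i => c i * Real.exp (-g i)) i = c i * Real.exp (-g i) / Z := rfl
      have hce : 0 < c i * Real.exp (-g i) := mul_pos (hc i) (Real.exp_pos _)
      rw [hx, Real.log_div h0.ne' (hc i).ne', Real.log_div h0.ne'
          (div_pos hce hZ).ne', Real.log_div hce.ne' hZ.ne',
          Real.log_mul (hc i).ne' (Real.exp_ne_zero _), Real.log_exp]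
      ring
  calc KL u c - KL u (nrm fun i => c i * Real.exp (-g i))
      = ∑ i, (u i * Real.log (u i / c i)
          - u i * Real.log (u i / nrm (fun i => c i * Real.exp (-g i)) i)) := by
        rw [Finset.sum_sub_distrib]; rfl
    _ = ∑ i, (-(u i * g i) - u i * Real.log Z) := by
        exact Finset.sum_congr rfl fun i _ => key i
    _ = -(∑ i, u i * g i) - Real.log Z := by
        rw [Finset.sum_sub_distrib, ← Finset.sum_neg_distrib, ← Finset.sum_mul, hu1, one_mul]

lemma kl_self_eq_zero {x : Fin (n + 1) → ℝ} (hx : ∀ i, 0 < x i) : KL x x = 0 := by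
  unfold KL
  apply Finset.sum_eq_zero
  intro i _
  rw [div_self (hx i).ne', Real.log_one, mul_zero]

/-- Three-point identity for the entropic mirror step. -/
lemma three_point {u c g : Fin (n + 1) → ℝ} (hu0 : ∀ i, 0 ≤ u i) (hu1 : ∑ i, u i = 1)
    (hc : ∀ i, 0 < c i) :
    ∑ i, g i * (nrm (fun i => c i * Real.exp (-g i)) i - u i)
      = KL u c - KL u (nrm fun i => c i * Real.exp (-g i))
        - KL (nrm fun i => c i * Real.exp (-g i)) c := by
  set x := nrm fun i => c i * Real.exp (-g i) with hxdef
  have hxpos : ∀ i, 0 < x i := nrm_pos fun i => mul_pos (hc i) (Real.exp_pos _)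
  have hxsum : ∑ i, x i = 1 := nrm_sum fun i => mul_pos (hc i) (Real.exp_pos _)
  have h1 := kl_sub hu0 hu1 hc (g := g)
  have h2 := kl_sub (fun i => (hxpos i).le) hxsum hc (g := g)
  rw [← hxdef] at h1 h2
  rw [kl_self_eq_zero hxpos, sub_zero] at h2
  have : ∑ i, g i * (x i - u i) = ∑ i, x i * g i - ∑ i, u i * g i := by
    rw [← Finset.sum_sub_distrib]
    exact Finset.sum_congr rfl fun i _ => by ring
  rw [this]
  linarith

/-- Nonnegativity of KL divergence. -/
lemma kl_nonneg {u c : Fin (n + 1) → ℝ} (hu0 : ∀ i, 0 ≤ u i) (hu1 : ∑ i, u i = 1)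
    (hc : ∀ i, 0 < c i) (hc1 : ∑ i, c i = 1) : 0 ≤ KL u c := by
  have key : ∀ i, u i - c i ≤ u i * Real.log (u i / c i) := by
    intro i
    rcases (hu0 i).eq_or_lt with h0 | h0
    · simp [← h0]; exact (hc i).le
    · have hx : 0 < u i / c i := div_pos h0 (hc i)
      have := Real.one_sub_inv_le_log_of_pos hx
      have hinv : (u i / c i)⁻¹ = c i / u i := by
        rw [inv_div]
      rw [hinv] at this
      have h2 : u i * (1 - c i / u i) ≤ u i * Real.log (u i / c i) :=
        mul_le_mul_of_nonneg_left this h0.le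
      have h3 : u i * (1 - c i / u i) = u i - c i := by
        field_simp
      linarith
  calc (0:ℝ) = ∑ i, (u i - c i) := by rw [Finset.sum_sub_distrib, hu1, hc1]; ring
    _ ≤ ∑ i, u i * Real.log (u i / c i) := Finset.sum_le_sum fun i _ => key i
    _ = KL u c := rfl

private lemma key1' {q x : ℝ} (hq : 0 < q) (hx : 0 ≤ x) :
    (q * x - q) ^ 2 / (q * x + 2 * q) ≤ (2/3) * (q * x * Real.log x - q * x + q) := by
  have hden : 0 < q * x + 2 * q := by nlinarith
  rw [div_le_iff₀ hden]
  nlinarith [mul_le_mul_of_nonneg_left (pw hx) (sq_nonneg q), sq_nonneg q]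

/-- Pinsker's inequality for finite distributions. -/
lemma pinsker {p q : Fin (n + 1) → ℝ} (hp0 : ∀ i, 0 ≤ p i) (hp1 : ∑ i, p i = 1)
    (hq : ∀ i, 0 < q i) (hq1 : ∑ i, q i = 1) :
    (∑ i, |p i - q i|) ^ 2 ≤ 2 * KL p q := by
  have hden : ∀ i, (0:ℝ) < p i + 2 * q i := fun i => by nlinarith [hp0 i, hq i]
  have key : ∀ i, (p i - q i) ^ 2 / (p i + 2 * q i)
      ≤ (2/3) * (p i * Real.log (p i / q i) - p i + q i) := by
    intro i
    have hx : 0 ≤ p i / q i := div_nonneg (hp0 i) (hq i).le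
    have hpi : q i * (p i / q i) = p i := mul_div_cancel₀ _ (hq i).ne'
    have := key1' (hq i) hx
    rw [hpi] at this
    exact this
  have hCS := Finset.sum_mul_sq_le_sq_mul_sq univ
    (fun i => |p i - q i| / Real.sqrt (p i + 2 * q i))
    (fun i => Real.sqrt (p i + 2 * q i))
  have h1 : (∑ i, |p i - q i| / Real.sqrt (p i + 2 * q i) * Real.sqrt (p i + 2 * q i))
      = ∑ i, |p i - q i| :=
    Finset.sum_congr rfl fun i _ => div_mul_cancel₀ _ (Real.sqrt_ne_zero'.mpr (hden i))
  have h2 : (∑ i, (|p i - q i| / Real.sqrt (p i + 2 * q i)) ^ 2)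
      = ∑ i, (p i - q i) ^ 2 / (p i + 2 * q i) :=
    Finset.sum_congr rfl fun i _ => by
      rw [div_pow, sq_abs, Real.sq_sqrt (hden i).le]
  have h3 : (∑ i, (Real.sqrt (p i + 2 * q i)) ^ 2) = (3:ℝ) := by
    have : (∑ i, (Real.sqrt (p i + 2 * q i)) ^ 2) = ∑ i, (p i + 2 * q i) :=
      Finset.sum_congr rfl fun i _ => Real.sq_sqrt (hden i).le
    rw [this, Finset.sum_add_distrib, hp1, ← Finset.mul_sum, hq1]
    norm_num
  rw [h1, h2, h3] at hCS
  have h4 : (∑ i, (p i - q i) ^ 2 / (p i + 2 * q i))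
      ≤ ∑ i, (2/3) * (p i * Real.log (p i / q i) - p i + q i) :=
    Finset.sum_le_sum fun i _ => key i
  have h5 : (∑ i, (2/3) * (p i * Real.log (p i / q i) - p i + q i)) = (2/3) * KL p q := by
    rw [← Finset.mul_sum]
    congr 1
    have : (∑ i, (p i * Real.log (p i / q i) - p i + q i))
        = (∑ i, p i * Real.log (p i / q i)) - (∑ i, p i) + (∑ i, q i) := by
      rw [Finset.sum_add_distrib, Finset.sum_sub_distrib]
    rw [this, hp1, hq1, KL]
    ring
  rw [h5] at h4
  nlinarith [hCS, h4]

/-- The key local bound: `⟨g, w - v⟩ ≤ Q2*(κ) + KL(v‖w)`. -/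
lemma local_bound {g w v : Fin (n + 1) → ℝ} (hw : ∀ i, 0 < w i) (hw1 : ∑ i, w i = 1)
    (hv0 : ∀ i, 0 ≤ v i) (hv1 : ∑ i, v i = 1) {κ : ℝ} (hκ : 0 ≤ κ)
    (hg : ∀ i, |g i| ≤ κ) :
    ∑ i, g i * (w i - v i) ≤ Q2star κ + KL v w := by
  set s := ∑ i, |w i - v i| with hs
  have hs0 : 0 ≤ s := Finset.sum_nonneg fun i _ => abs_nonneg _
  have hs2 : s ≤ 2 := by
    have : ∀ i, |w i - v i| ≤ w i + v i := fun i =>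
      abs_le.mpr ⟨by linarith [hv0 i, (hw i).le], by linarith [hv0 i, (hw i).le]⟩
    calc s ≤ ∑ i, (w i + v i) := Finset.sum_le_sum fun i _ => this i
      _ = 2 := by rw [Finset.sum_add_distrib, hw1, hv1]; norm_num
  have hgs : ∑ i, g i * (w i - v i) ≤ κ * s := by
    rw [hs, Finset.mul_sum]
    apply Finset.sum_le_sum
    intro i _
    calc g i * (w i - v i) ≤ |g i * (w i - v i)| := le_abs_self _
      _ = |g i| * |w i - v i| := abs_mul _ _
      _ ≤ κ * |w i - v i| := mul_le_mul_of_nonneg_right (hg i) (abs_nonneg _)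
  have hpin : s ^ 2 ≤ 2 * KL v w := by
    have := pinsker hv0 hv1 hw hw1
    have habs : (∑ i, |v i - w i|) = s := by
      rw [hs]; exact Finset.sum_congr rfl fun i _ => abs_sub_comm _ _
    rwa [habs] at this
  have hq : κ * s ≤ Q2star κ + s ^ 2 / 2 := by
    rw [Q2star, abs_of_nonneg hκ]
    rcases le_or_gt κ 2 with h2 | h2
    · rw [max_eq_right (by linarith)]
      nlinarith [sq_nonneg (κ - s)]
    · rw [max_eq_left (by linarith)]
      nlinarith [mul_nonneg (by linarith : (0:ℝ) ≤ κ - 2) (by linarith : (0:ℝ) ≤ 2 - s),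
        sq_nonneg (s - 2)]
  linarith

/-- Monotonicity of the softmax potential in the step size (power-mean inequality). -/
lemma logZ_mono {a L : Fin (n + 1) → ℝ} (ha : ∀ i, 0 < a i) (ha1 : ∑ i, a i = 1)
    {η' η : ℝ} (h0 : 0 < η') (h : η' ≤ η) :
    (1/η') * Real.log (∑ i, a i * Real.exp (-(η' * L i)))
      ≤ (1/η) * Real.log (∑ i, a i * Real.exp (-(η * L i))) := by
  have hη : 0 < η := lt_of_lt_of_le h0 h
  set r := η / η' with hr
  have hr1 : 1 ≤ r := (one_le_div h0).mpr h
  have hrpos : 0 < r := lt_of_lt_of_le one_pos hr1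
  have hmean := Real.arith_mean_le_rpow_mean univ a (fun i => Real.exp (-(η' * L i)))
    (fun i _ => (ha i).le) ha1 (fun i _ => (Real.exp_pos _).le) hr1
  have hkey : ∀ i, Real.exp (-(η' * L i)) ^ r = Real.exp (-(η * L i)) := by
    intro i
    rw [← Real.exp_mul]
    congr 1
    have hne : η' ≠ 0 := h0.ne'
    rw [hr]
    field_simp
  simp only [hkey] at hmean
  have hZ' : 0 < ∑ i, a i * Real.exp (-(η' * L i)) :=
    Finset.sum_pos (fun i _ => mul_pos (ha i) (Real.exp_pos _)) univ_nonempty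
  have hZ : 0 < ∑ i, a i * Real.exp (-(η * L i)) :=
    Finset.sum_pos (fun i _ => mul_pos (ha i) (Real.exp_pos _)) univ_nonempty
  have hlog := Real.log_le_log hZ' hmean
  rw [Real.log_rpow hZ] at hlog
  have := mul_le_mul_of_nonneg_left hlog (le_of_lt (one_div_pos.mpr h0))
  calc (1/η') * Real.log (∑ i, a i * Real.exp (-(η' * L i)))
      ≤ (1/η') * (1/r * Real.log (∑ i, a i * Real.exp (-(η * L i)))) := this
    _ = (1/η) * Real.log (∑ i, a i * Real.exp (-(η * L i))) := by
        rw [← mul_assoc]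
        congr 1
        rw [hr]
        field_simp

/-- The closed-form expression for `KL(u ‖ N(a e^{-ηL}))`. -/
lemma kl_formula {u a L : Fin (n + 1) → ℝ} (hu0 : ∀ i, 0 ≤ u i) (hu1 : ∑ i, u i = 1)
    (ha : ∀ i, 0 < a i) (η : ℝ) :
    KL u (nrm fun i => a i * Real.exp (-(η * L i)))
      = KL u a + η * (∑ i, u i * L i) + Real.log (∑ i, a i * Real.exp (-(η * L i))) := by
  have h := kl_sub hu0 hu1 ha (g := fun i => η * L i)
  have h2 : (∑ i, u i * (η * L i)) = η * ∑ i, u i * L i := by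
    rw [Finset.mul_sum]
    exact Finset.sum_congr rfl fun i _ => by ring
  rw [h2] at h
  linarith

end klbasic

/-- **Static regret for Optimistic Normalized Exponentiated Subgradient
(ONES with `θ_t ≡ 1`).** -/
theorem static_regret_ONES (n T : ℕ) (hT : 1 ≤ T)
    (a : Fin (n + 1) → ℝ) (ha : a ∈ simplex n) (hapos : ∀ i, 0 < a i)
    (η : ℕ → ℝ) (hηmono : ∀ t ∈ Icc 1 T, η (t + 1) ≤ η t) (hηpos : 0 < η (T + 1))
    (ℓ ℓhat : ℕ → Fin (n + 1) → ℝ)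
    (wtil w : ℕ → Fin (n + 1) → ℝ)
    (hwtil : ∀ t ∈ Icc 1 T, wtil t =
      nrm fun i => a i * Real.exp (-(η t) * ∑ s ∈ Ico 1 t, ℓ s i))
    (hw : ∀ t ∈ Icc 1 T, w t =
      nrm fun i => wtil t i * Real.exp (-(η t) * ℓhat t i))
    (u : Fin (n + 1) → ℝ) (hu : u ∈ simplex n) :
    ∑ t ∈ Icc 1 T, ∑ i, ℓ t i * (w t i - u i)
      ≤ (1 / η (T + 1)) * ∑ i, u i * Real.log (u i / a i)
        + ∑ t ∈ Icc 1 T, (1 / η t) * Q2star (η t * linf (ℓ t - ℓhat t))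
        - ∑ t ∈ Icc 1 T, (1 / η t) * ∑ i, w t i * Real.log (w t i / wtil t i) := by
  obtain ⟨ha0, ha1⟩ := ha
  obtain ⟨hu0, hu1⟩ := hu
  -- positivity of the step sizes
  have chain : ∀ s, s ≤ T + 1 → ∀ t, 1 ≤ t → t ≤ s → η s ≤ η t := by
    intro s
    induction s with
    | zero => intro _ t h1 h2; omega
    | succ s ih =>
      intro hs t h1 h2
      rcases eq_or_lt_of_le h2 with h | h
      · rw [h]
      · have hts : t ≤ s := by omega
        have h1s : 1 ≤ s := le_trans h1 hts
        have : η (s + 1) ≤ η s := hηmono s (mem_Icc.mpr ⟨h1s, by omega⟩)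
        exact le_trans this (ih (by omega) t h1 hts)
  have ηpos : ∀ t, 1 ≤ t → t ≤ T + 1 → 0 < η t := fun t h1 h2 =>
    lt_of_lt_of_le hηpos (chain (T + 1) le_rfl t h1 h2)
  -- the potential function
  set ψ : ℕ → ℝ := fun t => (∑ i, u i * (∑ s ∈ Ico 1 t, ℓ s i))
      + (1 / η t) * Real.log (∑ i, a i * Real.exp (-(η t * ∑ s ∈ Ico 1 t, ℓ s i))) with hψ
  -- the per-round inequality
  have step : ∀ t ∈ Icc 1 T, ∑ i, ℓ t i * (w t i - u i)
      ≤ (1 / η t) * Q2star (η t * linf (ℓ t - ℓhat t))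
        - (1 / η t) * KL (w t) (wtil t) + (ψ t - ψ (t + 1)) := by
    intro t ht
    obtain ⟨ht1, htT⟩ := mem_Icc.mp ht
    have hηt : 0 < η t := ηpos t ht1 (by omega)
    have hηt1 : 0 < η (t + 1) := ηpos (t + 1) (by omega) (by omega)
    have hdec : η (t + 1) ≤ η t := hηmono t ht
    -- cumulative losses
    have hL21 : ∀ i, (∑ s ∈ Ico 1 (t + 1), ℓ s i) = (∑ s ∈ Ico 1 t, ℓ s i) + ℓ t i :=
      fun i => Finset.sum_Ico_succ_top ht1 _
    -- normalized-form facts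
    have hwt : wtil t = nrm fun i => a i * Real.exp (-(η t * ∑ s ∈ Ico 1 t, ℓ s i)) := by
      rw [hwtil t ht]
      simp only [neg_mul]
    have hwft : w t = nrm fun i => wtil t i * Real.exp (-(η t * ℓhat t i)) := by
      rw [hw t ht]
      simp only [neg_mul]
    have hwtpos : ∀ i, 0 < wtil t i := by
      rw [hwt]; exact nrm_pos fun i => mul_pos (hapos i) (Real.exp_pos _)
    have hwtsum : ∑ i, wtil t i = 1 := by
      rw [hwt]; exact nrm_sum fun i => mul_pos (hapos i) (Real.exp_pos _)
    have hwpos : ∀ i, 0 < w t i := by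
      rw [hwft]; exact nrm_pos fun i => mul_pos (hwtpos i) (Real.exp_pos _)
    have hwsum : ∑ i, w t i = 1 := by
      rw [hwft]; exact nrm_sum fun i => mul_pos (hwtpos i) (Real.exp_pos _)
    -- the auxiliary point v
    set v : Fin (n + 1) → ℝ :=
      nrm fun i => a i * Real.exp (-(η t * ∑ s ∈ Ico 1 (t + 1), ℓ s i)) with hv
    have hvpos : ∀ i, 0 < v i := nrm_pos fun i => mul_pos (hapos i) (Real.exp_pos _)
    have hvsum : ∑ i, v i = 1 := nrm_sum fun i => mul_pos (hapos i) (Real.exp_pos _)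
    have hfun : (fun i => a i * Real.exp (-(η t * ∑ s ∈ Ico 1 (t + 1), ℓ s i)))
        = fun i => (a i * Real.exp (-(η t * ∑ s ∈ Ico 1 t, ℓ s i)))
            * Real.exp (-(η t * ℓ t i)) := by
      funext i
      rw [hL21 i, mul_assoc, ← Real.exp_add]
      congr 2
      ring
    have hvup : v = nrm fun i => wtil t i * Real.exp (-(η t * ℓ t i)) := by
      rw [hv, hfun, ← nrm_comp (fun i => mul_pos (hapos i) (Real.exp_pos _))
        (e := fun i => Real.exp (-(η t * ℓ t i))), ← hwt]
    -- three-point identities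
    have hA := three_point (g := fun i => η t * ℓhat t i)
      (fun i => (hvpos i).le) hvsum hwtpos
    rw [← hwft] at hA
    have hB := three_point (g := fun i => η t * ℓ t i) hu0 hu1 hwtpos
    rw [← hvup] at hB
    -- the local optimism bound
    have hκ0 : 0 ≤ η t * linf (ℓ t - ℓhat t) := by
      apply mul_nonneg hηt.le
      exact le_trans (abs_nonneg _)
        (Finset.le_sup' (fun i => |(ℓ t - ℓhat t) i|) (Finset.mem_univ 0))
    have hgbound : ∀ i, |η t * (ℓ t i - ℓhat t i)| ≤ η t * linf (ℓ t - ℓhat t) := by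
      intro i
      rw [abs_mul, abs_of_nonneg hηt.le]
      apply mul_le_mul_of_nonneg_left _ hηt.le
      have := Finset.le_sup' (fun i => |(ℓ t - ℓhat t) i|) (Finset.mem_univ i)
      simpa only [linf, Pi.sub_apply] using this
    have hC := local_bound (g := fun i => η t * (ℓ t i - ℓhat t i))
      hwpos hwsum (fun i => (hvpos i).le) hvsum hκ0 hgbound
    -- splitting the instantaneous regret
    have hsplit : η t * (∑ i, ℓ t i * (w t i - u i))
        = (∑ i, η t * (ℓ t i - ℓhat t i) * (w t i - v i))
          + (∑ i, η t * ℓhat t i * (w t i - v i))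
          + (∑ i, η t * ℓ t i * (v i - u i)) := by
      rw [Finset.mul_sum, ← Finset.sum_add_distrib, ← Finset.sum_add_distrib]
      exact Finset.sum_congr rfl fun i _ => by ring
    -- the KL formulas
    have hf1 : KL u (wtil t) = KL u a + η t * (∑ i, u i * ∑ s ∈ Ico 1 t, ℓ s i)
        + Real.log (∑ i, a i * Real.exp (-(η t * ∑ s ∈ Ico 1 t, ℓ s i))) := by
      rw [hwt]; exact kl_formula hu0 hu1 hapos (η t)
    have hf2 : KL u v = KL u a + η t * (∑ i, u i * ∑ s ∈ Ico 1 (t + 1), ℓ s i)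
        + Real.log (∑ i, a i * Real.exp (-(η t * ∑ s ∈ Ico 1 (t + 1), ℓ s i))) := by
      rw [hv]; exact kl_formula hu0 hu1 hapos (η t)
    -- power-mean step
    have hpm : (1 / η (t + 1)) * Real.log (∑ i, a i *
          Real.exp (-(η (t + 1) * ∑ s ∈ Ico 1 (t + 1), ℓ s i)))
        ≤ (1 / η t) * Real.log (∑ i, a i *
          Real.exp (-(η t * ∑ s ∈ Ico 1 (t + 1), ℓ s i))) :=
      logZ_mono hapos ha1 hηt1 hdec
    -- assemble, first multiplied by `η t`
    have hψt : ψ t = (∑ i, u i * (∑ s ∈ Ico 1 t, ℓ s i))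
        + (1 / η t) * Real.log (∑ i, a i * Real.exp (-(η t * ∑ s ∈ Ico 1 t, ℓ s i))) := by
      rw [hψ]
    have hψt1 : ψ (t + 1) = (∑ i, u i * (∑ s ∈ Ico 1 (t + 1), ℓ s i))
        + (1 / η (t + 1)) * Real.log (∑ i, a i *
          Real.exp (-(η (t + 1) * ∑ s ∈ Ico 1 (t + 1), ℓ s i))) := by
      rw [hψ]
    have hcancel1 : η t * ((1 / η t) * Real.log (∑ i, a i *
        Real.exp (-(η t * ∑ s ∈ Ico 1 t, ℓ s i))))
        = Real.log (∑ i, a i * Real.exp (-(η t * ∑ s ∈ Ico 1 t, ℓ s i))) := by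
      rw [← mul_assoc, mul_one_div, div_self hηt.ne', one_mul]
    have hpm' : η t * ((1 / η (t + 1)) * Real.log (∑ i, a i *
        Real.exp (-(η (t + 1) * ∑ s ∈ Ico 1 (t + 1), ℓ s i))))
        ≤ Real.log (∑ i, a i * Real.exp (-(η t * ∑ s ∈ Ico 1 (t + 1), ℓ s i))) := by
      calc η t * ((1 / η (t + 1)) * Real.log (∑ i, a i *
            Real.exp (-(η (t + 1) * ∑ s ∈ Ico 1 (t + 1), ℓ s i))))
          ≤ η t * ((1 / η t) * Real.log (∑ i, a i *
            Real.exp (-(η t * ∑ s ∈ Ico 1 (t + 1), ℓ s i)))) :=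
            mul_le_mul_of_nonneg_left hpm hηt.le
        _ = Real.log (∑ i, a i * Real.exp (-(η t * ∑ s ∈ Ico 1 (t + 1), ℓ s i))) := by
            rw [← mul_assoc, mul_one_div, div_self hηt.ne', one_mul]
    have main : η t * (∑ i, ℓ t i * (w t i - u i))
        ≤ Q2star (η t * linf (ℓ t - ℓhat t)) - KL (w t) (wtil t)
          + η t * (ψ t - ψ (t + 1)) := by
      have e1 : η t * (ψ t - ψ (t + 1))
          = η t * (∑ i, u i * (∑ s ∈ Ico 1 t, ℓ s i))
            + Real.log (∑ i, a i * Real.exp (-(η t * ∑ s ∈ Ico 1 t, ℓ s i)))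
            - η t * (∑ i, u i * (∑ s ∈ Ico 1 (t + 1), ℓ s i))
            - η t * ((1 / η (t + 1)) * Real.log (∑ i, a i *
              Real.exp (-(η (t + 1) * ∑ s ∈ Ico 1 (t + 1), ℓ s i)))) := by
        rw [hψt, hψt1, mul_sub, mul_add, mul_add, hcancel1]
        ring
      rw [hsplit, e1]
      linarith [hA, hB, hC, hpm']
    -- divide by `η t`
    have h2 := mul_le_mul_of_nonneg_left main (le_of_lt (one_div_pos.mpr hηt))
    have e2 : (1 / η t) * (η t * (∑ i, ℓ t i * (w t i - u i)))
        = ∑ i, ℓ t i * (w t i - u i) := by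
      rw [← mul_assoc, one_div_mul_cancel hηt.ne', one_mul]
    have e3 : (1 / η t) * (Q2star (η t * linf (ℓ t - ℓhat t)) - KL (w t) (wtil t)
          + η t * (ψ t - ψ (t + 1)))
        = (1 / η t) * Q2star (η t * linf (ℓ t - ℓhat t))
          - (1 / η t) * KL (w t) (wtil t) + (ψ t - ψ (t + 1)) := by
      have : (1 / η t) * (η t * (ψ t - ψ (t + 1))) = ψ t - ψ (t + 1) := by
        rw [← mul_assoc, one_div_mul_cancel hηt.ne', one_mul]
      rw [mul_add, mul_sub, this]
    rw [e2, e3] at h2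
    exact h2
  -- telescoping
  have tel : ∑ t ∈ Icc 1 T, (ψ t - ψ (t + 1)) = ψ 1 - ψ (T + 1) := by
    rw [← Finset.Ico_add_one_right_eq_Icc, Finset.sum_Ico_eq_sum_range]
    have := Finset.sum_range_sub' (fun k => ψ (1 + k)) T
    simpa [add_comm] using this
  have hψ1 : ψ 1 = 0 := by
    rw [hψ]
    simp [ha1]
  have hfinal : -ψ (T + 1) ≤ (1 / η (T + 1)) * ∑ i, u i * Real.log (u i / a i) := by
    have hηT1 : 0 < η (T + 1) := ηpos (T + 1) (by omega) le_rfl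
    have hform := kl_formula (L := fun i => ∑ s ∈ Ico 1 (T + 1), ℓ s i)
      hu0 hu1 hapos (η (T + 1))
    have hnn : 0 ≤ KL u (nrm fun i => a i *
        Real.exp (-(η (T + 1) * ∑ s ∈ Ico 1 (T + 1), ℓ s i))) :=
      kl_nonneg hu0 hu1 (nrm_pos fun i => mul_pos (hapos i) (Real.exp_pos _))
        (nrm_sum fun i => mul_pos (hapos i) (Real.exp_pos _))
    rw [hform] at hnn
    have hψT1 : ψ (T + 1) = (∑ i, u i * (∑ s ∈ Ico 1 (T + 1), ℓ s i))
        + (1 / η (T + 1)) * Real.log (∑ i, a i *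
          Real.exp (-(η (T + 1) * ∑ s ∈ Ico 1 (T + 1), ℓ s i))) := by
      rw [hψ]
    have hKL : KL u a = ∑ i, u i * Real.log (u i / a i) := rfl
    rw [hKL] at hnn
    -- from 0 ≤ K + η⟨L,u⟩ + log Z, divide by η
    have hdiv := div_nonneg hnn hηT1.le
    have e : (∑ i, u i * Real.log (u i / a i)
          + η (T + 1) * (∑ i, u i * ∑ s ∈ Ico 1 (T + 1), ℓ s i)
          + Real.log (∑ i, a i * Real.exp (-(η (T + 1) * ∑ s ∈ Ico 1 (T + 1), ℓ s i))))
          / η (T + 1)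
        = (1 / η (T + 1)) * ∑ i, u i * Real.log (u i / a i)
          + (∑ i, u i * ∑ s ∈ Ico 1 (T + 1), ℓ s i)
          + (1 / η (T + 1)) * Real.log (∑ i, a i *
            Real.exp (-(η (T + 1) * ∑ s ∈ Ico 1 (T + 1), ℓ s i))) := by
      field_simp
    rw [e] at hdiv
    rw [hψT1]
    linarith
  -- conclude
  have hsum := Finset.sum_le_sum step
  have hsplit2 : ∑ t ∈ Icc 1 T, ((1 / η t) * Q2star (η t * linf (ℓ t - ℓhat t))
        - (1 / η t) * KL (w t) (wtil t) + (ψ t - ψ (t + 1)))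
      = (∑ t ∈ Icc 1 T, (1 / η t) * Q2star (η t * linf (ℓ t - ℓhat t)))
        - (∑ t ∈ Icc 1 T, (1 / η t) * KL (w t) (wtil t))
        + (ψ 1 - ψ (T + 1)) := by
    rw [← tel, ← Finset.sum_sub_distrib, ← Finset.sum_add_distrib]
  rw [hsplit2, hψ1] at hsum
  have hKLw : ∀ t, (1 / η t) * KL (w t) (wtil t)
      = (1 / η t) * ∑ i, w t i * Real.log (w t i / wtil t i) := fun t => rfl
  simp only [hKLw] at hsum
  linarith [hsum, hfinal]
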